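/- arXiv:2603.18473 — 11 statements merged into one kernel-verified Lean document; each statement's English description precedes it below -/
import Mathlib

section
/- Let n ≥ 1, fix w ∈ ℝⁿ, and let B, C, V be real numbers with 0 ≤ B ≤ 1, C ≥ 0, V ≥ 0. For any d ∈ ℝⁿ with ⟨d, w⟩ ≥ 0, the following are equivalent: (i) d = 0, or d ≠ 0 and ‖d‖ ≤ V·(1 + C·(⟨d, w⟩/‖d‖)^B); (ii) there exist real numbers γ₁, γ₂, γ₃ ≥ 0 such that ‖d‖ ≤ γ₁, γ₁ ≤ (γ₂ + γ₃)^{1/(1+B)}, γ₂ ≤ V·γ₁^B, and γ₃ ≤ C·V·⟨d, w⟩^B. -/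
open scoped RealInnerProductSpace

/-- Power-conic representation of the Rothermel-inspired spread set (Proposition 3.1). -/
theorem rothermel_conic_representation (n : ℕ) (hn : 1 ≤ n)
    (w : EuclideanSpace ℝ (Fin n)) (B C V : ℝ)
    (hB0 : 0 ≤ B) (hB1 : B ≤ 1) (hC : 0 ≤ C) (hV : 0 ≤ V)
    (d : EuclideanSpace ℝ (Fin n)) (hdw : 0 ≤ ⟪d, w⟫) :
    (d = 0 ∨ (d ≠ 0 ∧ ‖d‖ ≤ V * (1 + C * (⟪d, w⟫ / ‖d‖) ^ B))) ↔
      (∃ γ₁ γ₂ γ₃ : ℝ, 0 ≤ γ₁ ∧ 0 ≤ γ₂ ∧ 0 ≤ γ₃ ∧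
        ‖d‖ ≤ γ₁ ∧ γ₁ ≤ (γ₂ + γ₃) ^ (1 / (1 + B)) ∧
        γ₂ ≤ V * γ₁ ^ B ∧ γ₃ ≤ C * V * ⟪d, w⟫ ^ B) := by
  have h1B : (0:ℝ) < 1 + B := by linarith
  have h1Bne : (1:ℝ) + B ≠ 0 := ne_of_gt h1B
  constructor
  · rintro (hd0 | ⟨hd0, hi⟩)
    · refine ⟨0, 0, 0, le_refl _, le_refl _, le_refl _, ?_, ?_, ?_, ?_⟩
      · simp [hd0]
      · positivity
      · simpa using mul_nonneg hV (Real.rpow_nonneg (le_refl 0) B)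
      · exact mul_nonneg (mul_nonneg hC hV) (Real.rpow_nonneg hdw B)
    · have hdpos : (0:ℝ) < ‖d‖ := norm_pos_iff.mpr hd0
      have hdBpos : (0:ℝ) < ‖d‖ ^ B := Real.rpow_pos_of_pos hdpos B
      refine ⟨‖d‖, V * ‖d‖ ^ B, C * V * ⟪d, w⟫ ^ B, norm_nonneg d,
        mul_nonneg hV hdBpos.le,
        mul_nonneg (mul_nonneg hC hV) (Real.rpow_nonneg hdw B),
        le_refl _, ?_, le_refl _, le_refl _⟩
      have hkey : ‖d‖ ^ (1 + B) ≤ V * ‖d‖ ^ B + C * V * ⟪d, w⟫ ^ B := by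
        have h1 : ‖d‖ ^ (1 + B) = ‖d‖ * ‖d‖ ^ B := by
          rw [Real.rpow_add hdpos, Real.rpow_one]
        rw [h1]
        have h2 : ‖d‖ * ‖d‖ ^ B ≤ V * (1 + C * (⟪d, w⟫ / ‖d‖) ^ B) * ‖d‖ ^ B :=
          mul_le_mul_of_nonneg_right hi hdBpos.le
        have h3 : (⟪d, w⟫ / ‖d‖) ^ B = ⟪d, w⟫ ^ B / ‖d‖ ^ B :=
          Real.div_rpow hdw (norm_nonneg d) B
        calc ‖d‖ * ‖d‖ ^ B ≤ V * (1 + C * (⟪d, w⟫ / ‖d‖) ^ B) * ‖d‖ ^ B := h2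
          _ = V * ‖d‖ ^ B + C * V * (⟪d, w⟫ ^ B / ‖d‖ ^ B * ‖d‖ ^ B) := by
            rw [h3]; ring
          _ = V * ‖d‖ ^ B + C * V * ⟪d, w⟫ ^ B := by
            rw [div_mul_cancel₀ _ (ne_of_gt hdBpos)]
      calc ‖d‖ = (‖d‖ ^ (1 + B)) ^ (1 / (1 + B)) := by
            rw [← Real.rpow_mul (norm_nonneg d), mul_one_div, div_self h1Bne,
              Real.rpow_one]
        _ ≤ (V * ‖d‖ ^ B + C * V * ⟪d, w⟫ ^ B) ^ (1 / (1 + B)) :=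
            Real.rpow_le_rpow (Real.rpow_nonneg (norm_nonneg d) _) hkey (by positivity)
  · rintro ⟨γ₁, γ₂, γ₃, h1, h2, h3, h4, h5, h6, h7⟩
    by_cases hd0 : d = 0
    · exact Or.inl hd0
    · right
      refine ⟨hd0, ?_⟩
      have hdpos : (0:ℝ) < ‖d‖ := norm_pos_iff.mpr hd0
      have hγ1pos : (0:ℝ) < γ₁ := lt_of_lt_of_le hdpos h4
      have hdBpos : (0:ℝ) < ‖d‖ ^ B := Real.rpow_pos_of_pos hdpos B
      have hγBpos : (0:ℝ) < γ₁ ^ B := Real.rpow_pos_of_pos hγ1pos B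
      have hsum : γ₁ ^ (1 + B) ≤ γ₂ + γ₃ := by
        have := Real.rpow_le_rpow h1 h5 h1B.le
        rwa [← Real.rpow_mul (by linarith : (0:ℝ) ≤ γ₂ + γ₃), one_div,
          inv_mul_cancel₀ h1Bne, Real.rpow_one] at this
      have hsum' : γ₁ * γ₁ ^ B ≤ V * γ₁ ^ B + C * V * ⟪d, w⟫ ^ B := by
        have h1' : γ₁ ^ (1 + B) = γ₁ * γ₁ ^ B := by
          rw [Real.rpow_add hγ1pos, Real.rpow_one]
        rw [← h1']; linarith
      have hγ1le : γ₁ ≤ V + C * V * ⟪d, w⟫ ^ B / γ₁ ^ B := by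
        rw [← mul_le_mul_iff_of_pos_right hγBpos, add_mul, div_mul_cancel₀ _ (ne_of_gt hγBpos)]
        exact hsum'
      have hmono : ‖d‖ ^ B ≤ γ₁ ^ B := Real.rpow_le_rpow (norm_nonneg d) h4 hB0
      have hdiv : C * V * ⟪d, w⟫ ^ B / γ₁ ^ B ≤ C * V * ⟪d, w⟫ ^ B / ‖d‖ ^ B :=
        div_le_div_of_nonneg_left (by positivity) hdBpos hmono
      have hrw : V * (1 + C * (⟪d, w⟫ / ‖d‖) ^ B) = V + V * C * (⟪d, w⟫ ^ B / ‖d‖ ^ B) := by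
        rw [Real.div_rpow hdw (norm_nonneg d)]; ring
      rw [hrw]
      calc ‖d‖ ≤ γ₁ := h4
        _ ≤ V + C * V * ⟪d, w⟫ ^ B / γ₁ ^ B := hγ1le
        _ ≤ V + C * V * ⟪d, w⟫ ^ B / ‖d‖ ^ B := by linarith
        _ = V + V * C * (⟪d, w⟫ ^ B / ‖d‖ ^ B) := by ring
end

section
/- Let n ≥ 2, R̄ ≥ 0, ε ≥ 0. Then the convex hull of the set Z^IP_n := {(d, w, z) ∈ ℝⁿ × ℝⁿ × ℝ : z ≤ ⟨d, w⟩, ‖d‖ ≤ R̄, ‖w‖ ≤ ε} equals the set Z^CH_n := {(d, w, z) : there exist real n×n matrices D, W, Z such that the 2n×2n block matrix [[D, Zᵀ],[Z, W]] − u·uᵀ is positive semidefinite, where u ∈ ℝ^{2n} is the concatenation of d and w, and tr(Z) ≥ z, tr(D) ≤ R̄², tr(W) ≤ ε²}. -/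
open scoped RealInnerProductSpace Matrix

open Matrix

section IpShorAux

variable {m : Type*} [Fintype m]

private lemma ipshor_inner_eq_sum {n : ℕ} (x y : EuclideanSpace ℝ (Fin n)) :
    ⟪x, y⟫ = ∑ i, x i * y i := by
  simp [PiLp.inner_apply, RCLike.inner_apply, conj_trivial, mul_comm]

private lemma ipshor_posSemidef_vecMulVec (v : m → ℝ) : (vecMulVec v v).PosSemidef := by
  rw [posSemidef_iff_dotProduct_mulVec]; constructor
  · ext i j; simp [vecMulVec_apply, conjTranspose_apply, mul_comm]
  · intro x
    have : star x ⬝ᵥ (vecMulVec v v *ᵥ x) = (v ⬝ᵥ x) ^ 2 := by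
      simp only [star_trivial, dotProduct, mulVec, vecMulVec_apply, Finset.mul_sum]
      rw [sq, Finset.sum_mul_sum]
      exact Finset.sum_congr rfl fun i _ => Finset.sum_congr rfl fun j _ => by ring
    rw [this]; positivity

private lemma ipshor_posSemidef_smul {M : Matrix m m ℝ} (hM : M.PosSemidef) {c : ℝ}
    (hc : 0 ≤ c) : (c • M).PosSemidef := by
  rw [posSemidef_iff_dotProduct_mulVec]; constructor
  · ext i j
    have := hM.1; rw [Matrix.IsHermitian] at this
    simp only [conjTranspose_apply, Matrix.smul_apply, smul_eq_mul, star_trivial]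
    conv_rhs => rw [← this]
    simp [conjTranspose_apply]
  · intro x
    have h := hM.dotProduct_mulVec_nonneg x
    have : star x ⬝ᵥ ((c • M) *ᵥ x) = c * (star x ⬝ᵥ (M *ᵥ x)) := by
      rw [smul_mulVec, dotProduct_smul, smul_eq_mul]
    rw [this]; exact mul_nonneg hc h

private lemma ipshor_psd_diag_nonneg [DecidableEq m] {M : Matrix m m ℝ}
    (hM : M.PosSemidef) (i : m) : 0 ≤ M i i := by
  have h := hM.dotProduct_mulVec_nonneg (Pi.single i 1)
  simpa [dotProduct, mulVec, Pi.single_apply] using h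

private lemma ipshor_psd_symm {M : Matrix m m ℝ} (hM : M.PosSemidef) (i j : m) :
    M j i = M i j := by
  have := hM.1; rw [Matrix.IsHermitian] at this
  conv_lhs => rw [← this]
  simp [conjTranspose_apply]

private lemma ipshor_psd_entry_sq_le [DecidableEq m] {M : Matrix m m ℝ}
    (hM : M.PosSemidef) (i j : m) (hij : i ≠ j) : M i j ^ 2 ≤ M i i * M j j := by
  have hsym := ipshor_psd_symm hM i j
  have key : ∀ s : ℝ, 0 ≤ M i i * (s * s) + (2 * M i j) * s + M j j := by
    intro s
    have h := hM.dotProduct_mulVec_nonneg (Pi.single i s + Pi.single j 1)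
    have e : star (Pi.single i s + Pi.single j 1) ⬝ᵥ (M *ᵥ (Pi.single i s + Pi.single j 1))
        = M i i * (s * s) + (2 * M i j) * s + M j j := by
      simp only [star_trivial, dotProduct, mulVec, Pi.add_apply, Pi.single_apply,
        mul_add, add_mul, Finset.sum_add_distrib]
      simp [Finset.sum_ite_eq', Finset.mul_sum, hij, hij.symm, hsym]
      ring
    rw [e] at h; exact h
  have h2 := discrim_le_zero key
  rw [discrim] at h2
  nlinarith

private lemma ipshor_exists_unit_orthogonal {n : ℕ} (hn : 2 ≤ n)
    (v : EuclideanSpace ℝ (Fin n)) :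
    ∃ e : EuclideanSpace ℝ (Fin n), ‖e‖ = 1 ∧ ⟪v, e⟫ = 0 := by
  have hdim : Module.finrank ℝ (EuclideanSpace ℝ (Fin n)) = n := by simp
  have h1 : Module.finrank ℝ (Submodule.span ℝ ({v} : Set (EuclideanSpace ℝ (Fin n)))) ≤ 1 := by
    simpa using finrank_span_le_card ({v} : Set (EuclideanSpace ℝ (Fin n)))
  have h2 := Submodule.finrank_add_finrank_orthogonal
    (K := (Submodule.span ℝ {v} : Submodule ℝ (EuclideanSpace ℝ (Fin n))))
  have h3 : (Submodule.span ℝ ({v} : Set (EuclideanSpace ℝ (Fin n))))ᗮ ≠ ⊥ := by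
    intro hbot
    rw [hbot] at h2
    simp [hdim] at h2
    omega
  obtain ⟨x, hx, hx0⟩ := Submodule.ne_bot_iff _ |>.mp h3
  refine ⟨‖x‖⁻¹ • x, ?_, ?_⟩
  · rw [norm_smul]; simp [norm_ne_zero_iff.mpr hx0]
  · rw [real_inner_smul_right]
    have := (Submodule.mem_orthogonal _ _).mp hx v (Submodule.mem_span_singleton_self v)
    simp [this]

private lemma ipshor_exists_c (t : ℝ) :
    ∃ c₁ c₂ : ℝ, 0 < c₁ ∧ 0 < c₂ ∧ c₁ ^ 2 + 2 * t * c₁ = 1 ∧ c₂ ^ 2 - 2 * t * c₂ = 1 := by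
  have hc2 : Real.sqrt (t ^ 2 + 1) ^ 2 = t ^ 2 + 1 := Real.sq_sqrt (by positivity)
  have hc0 : 0 < Real.sqrt (t ^ 2 + 1) := Real.sqrt_pos.mpr (by positivity)
  have htc : |t| < Real.sqrt (t ^ 2 + 1) := by
    rw [abs_lt]; constructor <;> nlinarith
  have htc1 : t < Real.sqrt (t ^ 2 + 1) := (le_abs_self t).trans_lt htc
  have htc2 : -Real.sqrt (t ^ 2 + 1) < t := neg_lt_of_neg_lt ((neg_le_abs t).trans_lt htc)
  exact ⟨Real.sqrt (t ^ 2 + 1) - t, Real.sqrt (t ^ 2 + 1) + t, by linarith, by linarith,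
    by nlinarith, by nlinarith⟩

end IpShorAux

private lemma ipshor_env_of_witness (n : ℕ) (R ε : ℝ) (hR : 0 ≤ R) (hε : 0 ≤ ε)
    (p : EuclideanSpace ℝ (Fin n) × EuclideanSpace ℝ (Fin n) × ℝ)
    (hp : ∃ D W Z : Matrix (Fin n) (Fin n) ℝ,
      (Matrix.fromBlocks D Zᵀ Z W -
        Matrix.vecMulVec (Sum.elim (fun i => p.1 i) (fun i => p.2.1 i))
          (Sum.elim (fun i => p.1 i) (fun i => p.2.1 i))).PosSemidef ∧
      p.2.2 ≤ Z.trace ∧ D.trace ≤ R ^ 2 ∧ W.trace ≤ ε ^ 2) :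
    ‖p.1‖ ≤ R ∧ ‖p.2.1‖ ≤ ε ∧
      p.2.2 ≤ ⟪p.1, p.2.1⟫ +
        Real.sqrt (R ^ 2 - ‖p.1‖ ^ 2) * Real.sqrt (ε ^ 2 - ‖p.2.1‖ ^ 2) := by
  obtain ⟨D, W, Z, hM, hz, hD, hW⟩ := hp
  set M := Matrix.fromBlocks D Zᵀ Z W -
      Matrix.vecMulVec (Sum.elim (fun i => p.1 i) (fun i => p.2.1 i))
        (Sum.elim (fun i => p.1 i) (fun i => p.2.1 i)) with hM_def
  have hMll : ∀ i, M (Sum.inl i) (Sum.inl i) = D i i - p.1 i * p.1 i := by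
    intro i; simp [hM_def, vecMulVec_apply]
  have hMrr : ∀ i, M (Sum.inr i) (Sum.inr i) = W i i - p.2.1 i * p.2.1 i := by
    intro i; simp [hM_def, vecMulVec_apply]
  have hMrl : ∀ i j, M (Sum.inr i) (Sum.inl j) = Z i j - p.2.1 i * p.1 j := by
    intro i j; simp [hM_def, vecMulVec_apply]
  have hd2 : ‖p.1‖ ^ 2 = ∑ i, p.1 i * p.1 i := by
    rw [← real_inner_self_eq_norm_sq, ipshor_inner_eq_sum]
  have hw2 : ‖p.2.1‖ ^ 2 = ∑ i, p.2.1 i * p.2.1 i := by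
    rw [← real_inner_self_eq_norm_sq, ipshor_inner_eq_sum]
  have htrD : D.trace = ∑ i, D i i := rfl
  have htrW : W.trace = ∑ i, W i i := rfl
  have htrZ : Z.trace = ∑ i, Z i i := rfl
  have hSA : 0 ≤ ∑ i, M (Sum.inl i) (Sum.inl i) :=
    Finset.sum_nonneg fun i _ => ipshor_psd_diag_nonneg hM (Sum.inl i)
  have hSB : 0 ≤ ∑ i, M (Sum.inr i) (Sum.inr i) :=
    Finset.sum_nonneg fun i _ => ipshor_psd_diag_nonneg hM (Sum.inr i)
  have hSA' : ∑ i, M (Sum.inl i) (Sum.inl i) = D.trace - ‖p.1‖ ^ 2 := by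
    rw [htrD, hd2, ← Finset.sum_sub_distrib]
    exact Finset.sum_congr rfl fun i _ => hMll i
  have hSB' : ∑ i, M (Sum.inr i) (Sum.inr i) = W.trace - ‖p.2.1‖ ^ 2 := by
    rw [htrW, hw2, ← Finset.sum_sub_distrib]
    exact Finset.sum_congr rfl fun i _ => hMrr i
  have hdR : ‖p.1‖ ^ 2 ≤ R ^ 2 := by rw [hSA'] at hSA; linarith
  have hwε : ‖p.2.1‖ ^ 2 ≤ ε ^ 2 := by rw [hSB'] at hSB; linarith
  have hd : ‖p.1‖ ≤ R := by nlinarith [norm_nonneg p.1]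
  have hw : ‖p.2.1‖ ≤ ε := by nlinarith [norm_nonneg p.2.1]
  refine ⟨hd, hw, ?_⟩
  -- bound the off-diagonal sum
  have hoff : ∀ i, M (Sum.inr i) (Sum.inl i) ≤
      Real.sqrt (M (Sum.inl i) (Sum.inl i) * M (Sum.inr i) (Sum.inr i)) := by
    intro i
    have hsq := ipshor_psd_entry_sq_le hM (Sum.inl i) (Sum.inr i) (by simp)
    have hsymm := ipshor_psd_symm hM (Sum.inl i) (Sum.inr i)
    calc M (Sum.inr i) (Sum.inl i) ≤ |M (Sum.inr i) (Sum.inl i)| := le_abs_self _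
      _ = Real.sqrt (M (Sum.inr i) (Sum.inl i) ^ 2) := (Real.sqrt_sq_eq_abs _).symm
      _ ≤ Real.sqrt (M (Sum.inl i) (Sum.inl i) * M (Sum.inr i) (Sum.inr i)) := by
          apply Real.sqrt_le_sqrt
          rw [hsymm]; exact hsq
  have hsum_r : (∑ i, Real.sqrt (M (Sum.inl i) (Sum.inl i) * M (Sum.inr i) (Sum.inr i))) ^ 2 ≤
      (∑ i, M (Sum.inl i) (Sum.inl i)) * (∑ i, M (Sum.inr i) (Sum.inr i)) := by
    apply Finset.sum_sq_le_sum_mul_sum_of_sq_eq_mul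
    · exact fun i _ => ipshor_psd_diag_nonneg hM (Sum.inl i)
    · exact fun i _ => ipshor_psd_diag_nonneg hM (Sum.inr i)
    · intro i _
      exact Real.sq_sqrt (mul_nonneg (ipshor_psd_diag_nonneg hM (Sum.inl i)) (ipshor_psd_diag_nonneg hM (Sum.inr i)))
  have hsum_r_nonneg : 0 ≤ ∑ i, Real.sqrt (M (Sum.inl i) (Sum.inl i) * M (Sum.inr i) (Sum.inr i)) :=
    Finset.sum_nonneg fun i _ => Real.sqrt_nonneg _
  have hS_le : ∑ i, M (Sum.inr i) (Sum.inl i) ≤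
      Real.sqrt (R ^ 2 - ‖p.1‖ ^ 2) * Real.sqrt (ε ^ 2 - ‖p.2.1‖ ^ 2) := by
    calc ∑ i, M (Sum.inr i) (Sum.inl i)
        ≤ ∑ i, Real.sqrt (M (Sum.inl i) (Sum.inl i) * M (Sum.inr i) (Sum.inr i)) :=
          Finset.sum_le_sum fun i _ => hoff i
      _ ≤ Real.sqrt ((∑ i, M (Sum.inl i) (Sum.inl i)) * (∑ i, M (Sum.inr i) (Sum.inr i))) := by
          rw [show (∑ i, Real.sqrt (M (Sum.inl i) (Sum.inl i) * M (Sum.inr i) (Sum.inr i)))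
              = Real.sqrt ((∑ i, Real.sqrt (M (Sum.inl i) (Sum.inl i) * M (Sum.inr i) (Sum.inr i))) ^ 2)
            from (Real.sqrt_sq hsum_r_nonneg).symm]
          exact Real.sqrt_le_sqrt hsum_r
      _ ≤ Real.sqrt ((R ^ 2 - ‖p.1‖ ^ 2) * (ε ^ 2 - ‖p.2.1‖ ^ 2)) := by
          apply Real.sqrt_le_sqrt
          apply mul_le_mul
          · rw [hSA']; linarith
          · rw [hSB']; linarith
          · exact hSB
          · linarith
      _ = Real.sqrt (R ^ 2 - ‖p.1‖ ^ 2) * Real.sqrt (ε ^ 2 - ‖p.2.1‖ ^ 2) :=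
          Real.sqrt_mul (by linarith) _
  have htrZ' : Z.trace = (∑ i, M (Sum.inr i) (Sum.inl i)) + ⟪p.1, p.2.1⟫ := by
    rw [htrZ, ipshor_inner_eq_sum, ← Finset.sum_add_distrib]
    refine Finset.sum_congr rfl fun i _ => ?_
    rw [hMrl i i]; ring
  calc p.2.2 ≤ Z.trace := hz
    _ = (∑ i, M (Sum.inr i) (Sum.inl i)) + ⟪p.1, p.2.1⟫ := htrZ'
    _ ≤ Real.sqrt (R ^ 2 - ‖p.1‖ ^ 2) * Real.sqrt (ε ^ 2 - ‖p.2.1‖ ^ 2) + ⟪p.1, p.2.1⟫ := by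
        linarith [hS_le]
    _ = ⟪p.1, p.2.1⟫ + Real.sqrt (R ^ 2 - ‖p.1‖ ^ 2) * Real.sqrt (ε ^ 2 - ‖p.2.1‖ ^ 2) := by ring

private lemma mem_hull_of_le_env {n : ℕ} (hn : 2 ≤ n) {R ε : ℝ} (hR : 0 ≤ R) (hε : 0 ≤ ε)
    (d w : EuclideanSpace ℝ (Fin n)) (z : ℝ) (hd : ‖d‖ ≤ R) (hw : ‖w‖ ≤ ε)
    (hz : z ≤ ⟪d, w⟫ + Real.sqrt (R ^ 2 - ‖d‖ ^ 2) * Real.sqrt (ε ^ 2 - ‖w‖ ^ 2)) :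
    (d, w, z) ∈ convexHull ℝ
      {p : EuclideanSpace ℝ (Fin n) × EuclideanSpace ℝ (Fin n) × ℝ |
        p.2.2 ≤ ⟪p.1, p.2.1⟫ ∧ ‖p.1‖ ≤ R ∧ ‖p.2.1‖ ≤ ε} := by
  set a : ℝ := Real.sqrt (R ^ 2 - ‖d‖ ^ 2) with ha_def
  set b : ℝ := Real.sqrt (ε ^ 2 - ‖w‖ ^ 2) with hb_def
  have hdR : ‖d‖ ^ 2 ≤ R ^ 2 := by nlinarith [norm_nonneg d]
  have hwε : ‖w‖ ^ 2 ≤ ε ^ 2 := by nlinarith [norm_nonneg w]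
  have ha2 : a ^ 2 = R ^ 2 - ‖d‖ ^ 2 := Real.sq_sqrt (by linarith)
  have hb2 : b ^ 2 = ε ^ 2 - ‖w‖ ^ 2 := Real.sq_sqrt (by linarith)
  have ha0 : 0 ≤ a := Real.sqrt_nonneg _
  have hb0 : 0 ≤ b := Real.sqrt_nonneg _
  rcases ha0.eq_or_lt with ha | ha
  · -- a = 0 : the point is in the set itself
    apply subset_convexHull
    refine ⟨?_, hd, hw⟩
    simpa [← ha] using hz
  rcases hb0.eq_or_lt with hb | hb
  · apply subset_convexHull
    refine ⟨?_, hd, hw⟩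
    simpa [← hb] using hz
  clear_value a b
  -- main construction
  obtain ⟨e, he1, heo⟩ := ipshor_exists_unit_orthogonal hn (b • d - a • w)
  have hee : ⟪e, e⟫ = 1 := by rw [real_inner_self_eq_norm_sq, he1]; norm_num
  set t : ℝ := ⟪d, e⟫ / a with ht_def
  have hde : ⟪d, e⟫ = a * t := by rw [ht_def]; field_simp
  have hwe : ⟪w, e⟫ = b * t := by
    have h0 : b * ⟪d, e⟫ - a * ⟪w, e⟫ = 0 := by
      rw [← real_inner_smul_left, ← real_inner_smul_left, ← inner_sub_left]
      exact heo
    have : a * ⟪w, e⟫ = a * (b * t) := by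
      rw [← sub_eq_zero]
      calc a * ⟪w, e⟫ - a * (b * t) = b * ⟪d, e⟫ - a * (b * t) := by linarith
        _ = 0 := by rw [hde]; ring
    exact mul_left_cancel₀ (ne_of_gt ha) this
  clear_value t
  obtain ⟨c₁, c₂, hc₁0, hc₂0, hc₁, hc₂⟩ := ipshor_exists_c t
  have hcc : 0 < c₁ + c₂ := by linarith
  set lam : ℝ := c₂ / (c₁ + c₂) with hlam_def
  set mu : ℝ := c₁ / (c₁ + c₂) with hmu_def
  have hlam0 : 0 ≤ lam := by positivity
  have hmu0 : 0 ≤ mu := by positivity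
  have hlm : lam + mu = 1 := by rw [hlam_def, hmu_def, ← add_div, add_comm c₂ c₁, div_self (ne_of_gt hcc)]
  have hlc : lam * c₁ = mu * c₂ := by
    field_simp [hlam_def, hmu_def]; ring
  -- the two points
  have hxnorm : ‖d + (c₁ * a) • e‖ ≤ R := by
    have h := norm_add_sq_real d ((c₁ * a) • e)
    rw [real_inner_smul_right, hde, norm_smul, Real.norm_eq_abs, abs_of_pos (by positivity),
      he1, mul_one] at h
    have h2 : ‖d + (c₁ * a) • e‖ ^ 2 = R ^ 2 := by
      rw [h]; linear_combination a ^ 2 * hc₁ + ha2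
    have h3 : ‖d + (c₁ * a) • e‖ = R := by
      rw [← Real.sqrt_sq (norm_nonneg _), h2, Real.sqrt_sq hR]
    exact le_of_eq h3
  have hynorm : ‖d - (c₂ * a) • e‖ ≤ R := by
    have h := norm_sub_sq_real d ((c₂ * a) • e)
    rw [real_inner_smul_right, hde, norm_smul, Real.norm_eq_abs, abs_of_pos (by positivity),
      he1, mul_one] at h
    have h2 : ‖d - (c₂ * a) • e‖ ^ 2 = R ^ 2 := by
      rw [h]; linear_combination a ^ 2 * hc₂ + ha2
    have h3 : ‖d - (c₂ * a) • e‖ = R := by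
      rw [← Real.sqrt_sq (norm_nonneg _), h2, Real.sqrt_sq hR]
    exact le_of_eq h3
  have hxnorm2 : ‖w + (c₁ * b) • e‖ ≤ ε := by
    have h := norm_add_sq_real w ((c₁ * b) • e)
    rw [real_inner_smul_right, hwe, norm_smul, Real.norm_eq_abs, abs_of_pos (by positivity),
      he1, mul_one] at h
    have h2 : ‖w + (c₁ * b) • e‖ ^ 2 = ε ^ 2 := by
      rw [h]; linear_combination b ^ 2 * hc₁ + hb2
    have h3 : ‖w + (c₁ * b) • e‖ = ε := by
      rw [← Real.sqrt_sq (norm_nonneg _), h2, Real.sqrt_sq hε]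
    exact le_of_eq h3
  have hynorm2 : ‖w - (c₂ * b) • e‖ ≤ ε := by
    have h := norm_sub_sq_real w ((c₂ * b) • e)
    rw [real_inner_smul_right, hwe, norm_smul, Real.norm_eq_abs, abs_of_pos (by positivity),
      he1, mul_one] at h
    have h2 : ‖w - (c₂ * b) • e‖ ^ 2 = ε ^ 2 := by
      rw [h]; linear_combination b ^ 2 * hc₂ + hb2
    have h3 : ‖w - (c₂ * b) • e‖ = ε := by
      rw [← Real.sqrt_sq (norm_nonneg _), h2, Real.sqrt_sq hε]
    exact le_of_eq h3
  have hxip : ⟪d + (c₁ * a) • e, w + (c₁ * b) • e⟫ = ⟪d, w⟫ + a * b := by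
    rw [inner_add_left, inner_add_right, inner_add_right, real_inner_smul_right,
      real_inner_smul_left, real_inner_smul_left, real_inner_smul_right,
      real_inner_comm w e, hde, hwe, hee]
    linear_combination (a * b) * hc₁
  have hyip : ⟪d - (c₂ * a) • e, w - (c₂ * b) • e⟫ = ⟪d, w⟫ + a * b := by
    rw [inner_sub_left, inner_sub_right, inner_sub_right, real_inner_smul_right,
      real_inner_smul_left, real_inner_smul_left, real_inner_smul_right,
      real_inner_comm w e, hde, hwe, hee]
    linear_combination (a * b) * hc₂
  have hxmem : (d + (c₁ * a) • e, w + (c₁ * b) • e, z) ∈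
      {p : EuclideanSpace ℝ (Fin n) × EuclideanSpace ℝ (Fin n) × ℝ |
        p.2.2 ≤ ⟪p.1, p.2.1⟫ ∧ ‖p.1‖ ≤ R ∧ ‖p.2.1‖ ≤ ε} := by
    refine ⟨?_, hxnorm, hxnorm2⟩
    show z ≤ _
    rw [hxip]; exact hz
  have hymem : (d - (c₂ * a) • e, w - (c₂ * b) • e, z) ∈
      {p : EuclideanSpace ℝ (Fin n) × EuclideanSpace ℝ (Fin n) × ℝ |
        p.2.2 ≤ ⟪p.1, p.2.1⟫ ∧ ‖p.1‖ ≤ R ∧ ‖p.2.1‖ ≤ ε} := by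
    refine ⟨?_, hynorm, hynorm2⟩
    show z ≤ _
    rw [hyip]; exact hz
  have hcomb := (convex_convexHull ℝ _) (subset_convexHull ℝ _ hxmem)
    (subset_convexHull ℝ _ hymem) hlam0 hmu0 hlm
  have hccne : c₁ + c₂ ≠ 0 := ne_of_gt hcc
  have heq : lam • ((d + (c₁ * a) • e, w + (c₁ * b) • e, z) :
        EuclideanSpace ℝ (Fin n) × EuclideanSpace ℝ (Fin n) × ℝ) +
      mu • (d - (c₂ * a) • e, w - (c₂ * b) • e, z) = (d, w, z) := by
    refine Prod.ext ?_ (Prod.ext ?_ ?_)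
    · show lam • (d + (c₁ * a) • e) + mu • (d - (c₂ * a) • e) = d
      match_scalars <;> simp only [hlam_def, hmu_def] <;> field_simp <;> ring
    · show lam • (w + (c₁ * b) • e) + mu • (w - (c₂ * b) • e) = w
      match_scalars <;> simp only [hlam_def, hmu_def] <;> field_simp <;> ring
    · show lam * z + mu * z = z
      rw [← add_mul, hlm, one_mul]
  rw [heq] at hcomb
  exact hcomb


private lemma ipshor_subset (n : ℕ) (R ε : ℝ) (hR : 0 ≤ R) (hε : 0 ≤ ε)
    (p : EuclideanSpace ℝ (Fin n) × EuclideanSpace ℝ (Fin n) × ℝ)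
    (hp : p.2.2 ≤ ⟪p.1, p.2.1⟫ ∧ ‖p.1‖ ≤ R ∧ ‖p.2.1‖ ≤ ε) :
    ∃ D W Z : Matrix (Fin n) (Fin n) ℝ,
      (Matrix.fromBlocks D Zᵀ Z W -
        Matrix.vecMulVec (Sum.elim (fun i => p.1 i) (fun i => p.2.1 i))
          (Sum.elim (fun i => p.1 i) (fun i => p.2.1 i))).PosSemidef ∧
      p.2.2 ≤ Z.trace ∧ D.trace ≤ R ^ 2 ∧ W.trace ≤ ε ^ 2 := by
  obtain ⟨hz, hd, hw⟩ := hp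
  set d : Fin n → ℝ := fun i => p.1 i with hd'
  set w : Fin n → ℝ := fun i => p.2.1 i with hw'
  refine ⟨vecMulVec d d, vecMulVec w w, vecMulVec w d, ?_, ?_, ?_, ?_⟩
  · have : fromBlocks (vecMulVec d d) (vecMulVec w d)ᵀ (vecMulVec w d) (vecMulVec w w) =
        vecMulVec (Sum.elim d w) (Sum.elim d w) := by
      ext i j
      rcases i with i | i <;> rcases j with j | j <;>
        simp [vecMulVec_apply, mul_comm]
    rw [this, sub_self]
    exact Matrix.PosSemidef.zero
  · have : (vecMulVec w d).trace = ∑ i, d i * w i := by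
      simp [Matrix.trace, Matrix.diag, vecMulVec_apply, mul_comm]
    rw [this, ← ipshor_inner_eq_sum]
    exact hz
  · have : (vecMulVec d d).trace = ⟪p.1, p.1⟫ := by
      rw [ipshor_inner_eq_sum]; simp [Matrix.trace, Matrix.diag, vecMulVec_apply]; rfl
    rw [this, real_inner_self_eq_norm_sq]
    exact pow_le_pow_left₀ (norm_nonneg _) hd 2
  · have : (vecMulVec w w).trace = ⟪p.2.1, p.2.1⟫ := by
      rw [ipshor_inner_eq_sum]; simp [Matrix.trace, Matrix.diag, vecMulVec_apply]; rfl
    rw [this, real_inner_self_eq_norm_sq]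
    exact pow_le_pow_left₀ (norm_nonneg _) hw 2

private lemma ipshor_convex (n : ℕ) (R ε : ℝ) :
    Convex ℝ {p : EuclideanSpace ℝ (Fin n) × EuclideanSpace ℝ (Fin n) × ℝ |
        ∃ D W Z : Matrix (Fin n) (Fin n) ℝ,
          (Matrix.fromBlocks D Zᵀ Z W -
            Matrix.vecMulVec (Sum.elim (fun i => p.1 i) (fun i => p.2.1 i))
              (Sum.elim (fun i => p.1 i) (fun i => p.2.1 i))).PosSemidef ∧
          p.2.2 ≤ Z.trace ∧ D.trace ≤ R ^ 2 ∧ W.trace ≤ ε ^ 2} := by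
  rintro p hp q hq α β hα hβ hαβ
  obtain ⟨D₁, W₁, Z₁, hM₁, hz₁, hD₁, hW₁⟩ := hp
  obtain ⟨D₂, W₂, Z₂, hM₂, hz₂, hD₂, hW₂⟩ := hq
  refine ⟨α • D₁ + β • D₂, α • W₁ + β • W₂, α • Z₁ + β • Z₂, ?_, ?_, ?_, ?_⟩
  · set u₁ : Fin n ⊕ Fin n → ℝ := Sum.elim (fun i => p.1 i) (fun i => p.2.1 i) with hu₁
    set u₂ : Fin n ⊕ Fin n → ℝ := Sum.elim (fun i => q.1 i) (fun i => q.2.1 i) with hu₂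
    have hu : (Sum.elim (fun i => (α • p + β • q).1 i) (fun i => (α • p + β • q).2.1 i))
        = α • u₁ + β • u₂ := by
      funext i
      rcases i with i | i <;>
        simp [hu₁, hu₂, Prod.fst_add, Prod.snd_add, Prod.smul_fst, Prod.smul_snd,
          PiLp.add_apply, PiLp.smul_apply, smul_eq_mul]
    have hvv : vecMulVec (α • u₁ + β • u₂) (α • u₁ + β • u₂)
        = α • vecMulVec u₁ u₁ + β • vecMulVec u₂ u₂ - (α * β) • vecMulVec (u₁ - u₂) (u₁ - u₂) := by
      ext i j
      simp only [vecMulVec_apply, Pi.add_apply, Pi.smul_apply, Pi.sub_apply, Matrix.sub_apply,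
        Matrix.add_apply, Matrix.smul_apply, smul_eq_mul]
      linear_combination (α * (u₁ i * u₁ j) + β * (u₂ i * u₂ j)) * hαβ
    have key : fromBlocks (α • D₁ + β • D₂) (α • Z₁ + β • Z₂)ᵀ (α • Z₁ + β • Z₂) (α • W₁ + β • W₂) -
        vecMulVec (Sum.elim (fun i => (α • p + β • q).1 i) (fun i => (α • p + β • q).2.1 i))
          (Sum.elim (fun i => (α • p + β • q).1 i) (fun i => (α • p + β • q).2.1 i)) =
        α • (fromBlocks D₁ Z₁ᵀ Z₁ W₁ - vecMulVec u₁ u₁) +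
        β • (fromBlocks D₂ Z₂ᵀ Z₂ W₂ - vecMulVec u₂ u₂) +
        (α * β) • vecMulVec (u₁ - u₂) (u₁ - u₂) := by
      rw [hu, hvv, transpose_add, transpose_smul, transpose_smul, ← fromBlocks_add,
        ← fromBlocks_smul, ← fromBlocks_smul]
      module
    rw [key]
    exact ((ipshor_posSemidef_smul hM₁ hα).add (ipshor_posSemidef_smul hM₂ hβ)).add
      (ipshor_posSemidef_smul (ipshor_posSemidef_vecMulVec _) (mul_nonneg hα hβ))
  · simp only [Prod.snd_add, Prod.smul_snd, smul_eq_mul, trace_add, trace_smul]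
    calc α * p.2.2 + β * q.2.2 ≤ α * Z₁.trace + β * Z₂.trace := by
          apply add_le_add <;> apply mul_le_mul_of_nonneg_left <;> assumption
      _ = _ := by simp [smul_eq_mul]
  · simp only [trace_add, trace_smul, smul_eq_mul]
    calc α * D₁.trace + β * D₂.trace ≤ α * R ^ 2 + β * R ^ 2 := by
          apply add_le_add <;> apply mul_le_mul_of_nonneg_left <;> assumption
      _ = R ^ 2 := by rw [← add_mul, hαβ, one_mul]
  · simp only [trace_add, trace_smul, smul_eq_mul]
    calc α * W₁.trace + β * W₂.trace ≤ α * ε ^ 2 + β * ε ^ 2 := by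
          apply add_le_add <;> apply mul_le_mul_of_nonneg_left <;> assumption
      _ = ε ^ 2 := by rw [← add_mul, hαβ, one_mul]

/-- For `n ≥ 2`, the Shor semidefinite relaxation gives exactly the convex hull of the
inner-product hypograph over Euclidean balls (Corollary 3.3). -/
theorem convexHull_ip_eq_shor (n : ℕ) (hn : 2 ≤ n) (R ε : ℝ) (hR : 0 ≤ R) (hε : 0 ≤ ε) :
    convexHull ℝ
        {p : EuclideanSpace ℝ (Fin n) × EuclideanSpace ℝ (Fin n) × ℝ |
          p.2.2 ≤ ⟪p.1, p.2.1⟫ ∧ ‖p.1‖ ≤ R ∧ ‖p.2.1‖ ≤ ε} =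
      {p : EuclideanSpace ℝ (Fin n) × EuclideanSpace ℝ (Fin n) × ℝ |
        ∃ D W Z : Matrix (Fin n) (Fin n) ℝ,
          (Matrix.fromBlocks D Zᵀ Z W -
            Matrix.vecMulVec (Sum.elim (fun i => p.1 i) (fun i => p.2.1 i))
              (Sum.elim (fun i => p.1 i) (fun i => p.2.1 i))).PosSemidef ∧
          p.2.2 ≤ Z.trace ∧ D.trace ≤ R ^ 2 ∧ W.trace ≤ ε ^ 2} := by
  apply Set.Subset.antisymm
  · apply convexHull_min
    · intro p hp
      exact ipshor_subset n R ε hR hε p hp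
    · exact ipshor_convex n R ε
  · intro p hp
    obtain ⟨hd, hw, hz⟩ := ipshor_env_of_witness n R ε hR hε p hp
    have h := mem_hull_of_le_env hn hR hε p.1 p.2.1 p.2.2 hd hw hz
    simpa using h
end

section
/- Let n ≥ 1, R̄ ≥ 0, ε ≥ 0, and let (d, w, z) ∈ ℝⁿ × ℝⁿ × ℝ satisfy z ≤ ⟨d, w⟩, ‖d‖ ≤ R̄, and ‖w‖ ≤ ε. Then 2·R̄²·‖w‖² + 2·ε²·‖d‖² − 4·ε·R̄·⟨d, w⟩ ≤ (2·ε·R̄ − z)² − z². -/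
open scoped RealInnerProductSpace

/-- The key estimate in the validity proof of the rotated McCormick inequality. -/
theorem rotated_mccormick_key_estimate (n : ℕ) (hn : 1 ≤ n) (R ε : ℝ)
    (hR : 0 ≤ R) (hε : 0 ≤ ε)
    (d w : EuclideanSpace ℝ (Fin n)) (z : ℝ)
    (hz : z ≤ ⟪d, w⟫) (hd : ‖d‖ ≤ R) (hw : ‖w‖ ≤ ε) :
    2 * R ^ 2 * ‖w‖ ^ 2 + 2 * ε ^ 2 * ‖d‖ ^ 2 - 4 * ε * R * ⟪d, w⟫ ≤
      (2 * ε * R - z) ^ 2 - z ^ 2 := by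
  have h1 : R ^ 2 * ‖w‖ ^ 2 ≤ R ^ 2 * ε ^ 2 := by
    have := mul_self_le_mul_self (norm_nonneg w) hw
    nlinarith [sq_nonneg R]
  have h2 : ε ^ 2 * ‖d‖ ^ 2 ≤ ε ^ 2 * R ^ 2 := by
    have := mul_self_le_mul_self (norm_nonneg d) hd
    nlinarith [sq_nonneg ε]
  have h3 : 4 * ε * R * z ≤ 4 * ε * R * ⟪d, w⟫ := by
    have h := mul_le_mul_of_nonneg_left hz (mul_nonneg hε hR)
    nlinarith
  nlinarith
end

section
/- Let R̄ ≥ 0, ε ≥ 0, and let d = (d₁, d₂) ∈ ℝ², w = (w₁, w₂) ∈ ℝ², z ∈ ℝ satisfy z ≤ ⟨d, w⟩, ‖d‖ ≤ R̄, and ‖w‖ ≤ ε. Then √( (R̄·(w₁+w₂) − ε·(d₁+d₂))² + (R̄·(w₁−w₂) − ε·(d₁−d₂))² ) ≤ 2·ε·R̄ − z. -/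
open scoped RealInnerProductSpace

/-- The loose rotated McCormick inequality (equation (13)) is valid on `Z^IP_2`. -/
theorem loose_rotated_mccormick_valid (R ε : ℝ) (hR : 0 ≤ R) (hε : 0 ≤ ε)
    (d w : EuclideanSpace ℝ (Fin 2)) (z : ℝ)
    (hz : z ≤ ⟪d, w⟫) (hd : ‖d‖ ≤ R) (hw : ‖w‖ ≤ ε) :
    Real.sqrt ((R * (w 0 + w 1) - ε * (d 0 + d 1)) ^ 2 +
        (R * (w 0 - w 1) - ε * (d 0 - d 1)) ^ 2) ≤ 2 * ε * R - z := by
  have hS : ⟪d, w⟫ = d 0 * w 0 + d 1 * w 1 := by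
    simp [PiLp.inner_apply, Fin.sum_univ_two, mul_comm]
  have hDn : ‖d‖ ^ 2 = d 0 ^ 2 + d 1 ^ 2 := by
    rw [EuclideanSpace.norm_eq, Real.sq_sqrt (by positivity)]
    simp [Fin.sum_univ_two, sq_abs]
  have hWn : ‖w‖ ^ 2 = w 0 ^ 2 + w 1 ^ 2 := by
    rw [EuclideanSpace.norm_eq, Real.sq_sqrt (by positivity)]
    simp [Fin.sum_univ_two, sq_abs]
  have hD : d 0 ^ 2 + d 1 ^ 2 ≤ R ^ 2 := by
    rw [← hDn]; exact pow_le_pow_left₀ (norm_nonneg _) hd 2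
  have hW : w 0 ^ 2 + w 1 ^ 2 ≤ ε ^ 2 := by
    rw [← hWn]; exact pow_le_pow_left₀ (norm_nonneg _) hw 2
  have hzRε : z ≤ ε * R := by
    calc z ≤ ⟪d, w⟫ := hz
    _ ≤ ‖d‖ * ‖w‖ := real_inner_le_norm d w
    _ ≤ R * ε := mul_le_mul hd hw (norm_nonneg _) hR
    _ = ε * R := mul_comm _ _
  have hrhs : 0 ≤ 2 * ε * R - z := by nlinarith [mul_nonneg hε hR]
  rw [show (2 * ε * R - z) = Real.sqrt ((2 * ε * R - z) ^ 2) by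
    rw [Real.sqrt_sq hrhs]]
  apply Real.sqrt_le_sqrt
  rw [hS] at hz
  nlinarith [sq_nonneg z, mul_nonneg hε hR, mul_le_mul_of_nonneg_left hW (sq_nonneg R),
    mul_le_mul_of_nonneg_left hD (sq_nonneg ε),
    mul_le_mul_of_nonneg_left hz (mul_nonneg hε hR)]
end

section
/- Let R̄ ≥ 0, ε ≥ 0, and let d = (d₁, d₂) ∈ ℝ², w = (w₁, w₂) ∈ ℝ², z ∈ ℝ satisfy z ≤ ⟨d, w⟩, ‖d‖ ≤ R̄, and ‖w‖ ≤ ε. Then √( (R̄·(w₁+w₂) − ε·(d₁+d₂))² + (R̄·(w₁−w₂) − ε·(d₁−d₂))² + z² ) ≤ 2·ε·R̄ − z. -/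
open scoped RealInnerProductSpace

/-- The rotated McCormick inequality (equation (14)) is valid on `Z^IP_2` (Theorem 3.7). -/
theorem rotated_mccormick_valid (R ε : ℝ) (hR : 0 ≤ R) (hε : 0 ≤ ε)
    (d w : EuclideanSpace ℝ (Fin 2)) (z : ℝ)
    (hz : z ≤ ⟪d, w⟫) (hd : ‖d‖ ≤ R) (hw : ‖w‖ ≤ ε) :
    Real.sqrt ((R * (w 0 + w 1) - ε * (d 0 + d 1)) ^ 2 +
        (R * (w 0 - w 1) - ε * (d 0 - d 1)) ^ 2 + z ^ 2) ≤ 2 * ε * R - z := by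
  have hinner : ⟪d, w⟫ = d 0 * w 0 + d 1 * w 1 := by
    simp [PiLp.inner_apply, Fin.sum_univ_two, RCLike.inner_apply, mul_comm]
  have hdn : d 0 ^ 2 + d 1 ^ 2 ≤ R ^ 2 := by
    have h1 : ‖d‖ ^ 2 = d 0 ^ 2 + d 1 ^ 2 := by
      rw [EuclideanSpace.norm_eq, Real.sq_sqrt (by positivity)]
      simp [Fin.sum_univ_two, sq_abs]
    nlinarith [norm_nonneg d]
  have hwn : w 0 ^ 2 + w 1 ^ 2 ≤ ε ^ 2 := by
    have h1 : ‖w‖ ^ 2 = w 0 ^ 2 + w 1 ^ 2 := by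
      rw [EuclideanSpace.norm_eq, Real.sq_sqrt (by positivity)]
      simp [Fin.sum_univ_two, sq_abs]
    nlinarith [norm_nonneg w]
  have hzle : z ≤ ε * R := by
    have := real_inner_le_norm d w
    nlinarith [norm_nonneg d, norm_nonneg w]
  rw [hinner] at hz
  have hrhs : 0 ≤ 2 * ε * R - z := by nlinarith
  apply Real.sqrt_le_sqrt (by nlinarith [mul_nonneg hε hR] :
      (R * (w 0 + w 1) - ε * (d 0 + d 1)) ^ 2 +
        (R * (w 0 - w 1) - ε * (d 0 - d 1)) ^ 2 + z ^ 2 ≤ (2 * ε * R - z) ^ 2)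
    |>.trans_eq (Real.sqrt_sq hrhs)
end

section
/- Let B, C, V be real numbers with B ≥ 1, C ≥ 0, V ≥ 0, and fix w ∈ ℝ². Suppose d ∈ ℝ² satisfies either d = 0, or d ≠ 0 together with ⟨d, w⟩ ≥ 0 and ‖d‖ ≤ V·(1 + C·(⟨d, w⟩/‖d‖)^B). Then there exist d^c, d^w ∈ ℝ² with d = d^c + d^w, ‖d^c‖ ≤ V, and ‖d^w‖² ≤ C·V·‖w‖^{B−1}·⟨d^w, w⟩. -/
open scoped RealInnerProductSpace

/-- Containment part of Proposition 3.9: every point of the Rothermel-inspired spread set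
lies in the relaxed spread set `S^∠`. -/
theorem rothermel_subset_relaxed (B C V : ℝ) (hB : 1 ≤ B) (hC : 0 ≤ C) (hV : 0 ≤ V)
    (w d : EuclideanSpace ℝ (Fin 2))
    (h : d = 0 ∨ (d ≠ 0 ∧ 0 ≤ ⟪d, w⟫ ∧ ‖d‖ ≤ V * (1 + C * (⟪d, w⟫ / ‖d‖) ^ B))) :
    ∃ dc dw : EuclideanSpace ℝ (Fin 2),
      d = dc + dw ∧ ‖dc‖ ≤ V ∧ ‖dw‖ ^ 2 ≤ C * V * ‖w‖ ^ (B - 1) * ⟪dw, w⟫ := by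
  rcases h with rfl | ⟨hd0, hdw, hle⟩
  · exact ⟨0, 0, by simp, by simpa, by simp⟩
  by_cases hVd : ‖d‖ ≤ V
  · exact ⟨d, 0, by simp, hVd, by simp⟩
  push_neg at hVd
  have hdpos : (0:ℝ) < ‖d‖ := norm_pos_iff.mpr hd0
  set t : ℝ := ⟪d, w⟫ / ‖d‖ with ht
  have ht0 : 0 ≤ t := div_nonneg hdw hdpos.le
  have htw : t ≤ ‖w‖ := by
    rw [ht, div_le_iff₀ hdpos]
    calc ⟪d, w⟫ ≤ ‖d‖ * ‖w‖ := real_inner_le_norm d w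
      _ = ‖w‖ * ‖d‖ := mul_comm _ _
  have hwB : (0:ℝ) ≤ ‖w‖ ^ (B - 1) := Real.rpow_nonneg (norm_nonneg w) _
  have hpow : t ^ B ≤ ‖w‖ ^ (B - 1) * t := by
    rcases ht0.eq_or_lt with h0 | hpos
    · rw [← h0, Real.zero_rpow (by linarith), mul_zero]
    · have h1 : t ^ B = t ^ (B - 1) * t := by
        rw [Real.rpow_sub_one hpos.ne', div_mul_cancel₀]
        exact hpos.ne'
      rw [h1]
      exact mul_le_mul_of_nonneg_right
        (Real.rpow_le_rpow ht0 htw (by linarith)) ht0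
  refine ⟨(V / ‖d‖) • d, (1 - V / ‖d‖) • d, ?_, ?_, ?_⟩
  · rw [← add_smul]
    rw [show V / ‖d‖ + (1 - V / ‖d‖) = 1 by ring, one_smul]
  · rw [norm_smul, Real.norm_eq_abs, abs_of_nonneg (div_nonneg hV hdpos.le),
      div_mul_cancel₀ _ hdpos.ne']
  · have hnw : ‖(1 - V / ‖d‖) • d‖ = ‖d‖ - V := by
      rw [norm_smul, Real.norm_eq_abs, abs_of_nonneg, sub_mul, one_mul,
        div_mul_cancel₀ _ hdpos.ne']
      have : V / ‖d‖ ≤ 1 := by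
        rw [div_le_one hdpos]; linarith
      linarith
    rw [hnw, real_inner_smul_left]
    have hinner : (1 - V / ‖d‖) * ⟪d, w⟫ = (‖d‖ - V) * t := by
      field_simp [ht]
      rw [ht, mul_div_assoc', mul_comm, mul_div_assoc, div_self hdpos.ne', mul_one]
    rw [hinner]
    have key : ‖d‖ - V ≤ C * V * (‖w‖ ^ (B - 1) * t) := by
      have h2 : ‖d‖ - V ≤ V * C * t ^ B := by nlinarith [hle]
      have h3 : V * C * t ^ B ≤ V * C * (‖w‖ ^ (B - 1) * t) :=
        mul_le_mul_of_nonneg_left hpow (by positivity)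
      linarith
    nlinarith [key, mul_le_mul_of_nonneg_left key (by linarith : (0:ℝ) ≤ ‖d‖ - V)]
end

section
/- Let B, C, V be real numbers with B ≥ 1, C ≥ 0, V ≥ 0, and fix w, x ∈ ℝ². Then {d^c + d^w + x : d^c, d^w ∈ ℝ², ‖d^c‖ ≤ V, ‖d^w‖² ≤ C·V·‖w‖^{B−1}·⟨d^w, w⟩} = B_{τ}(σ·w + x), the closed Euclidean ball centered at σ·w + x of radius τ, where σ := (C·V/2)·‖w‖^{B−1} and τ := V + (C·V/2)·‖w‖^B. -/
open scoped RealInnerProductSpace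

/-- Ball characterization in Proposition 3.9: the relaxed spread set `S^∠(w, x)` is the
closed Euclidean ball of radius `τ = V + (C·V/2)·‖w‖^B` centered at `σ·w + x`, with
`σ = (C·V/2)·‖w‖^(B-1)`. -/
theorem relaxed_spread_eq_closedBall (B C V : ℝ) (hB : 1 ≤ B) (hC : 0 ≤ C) (hV : 0 ≤ V)
    (w x : EuclideanSpace ℝ (Fin 2)) :
    {y : EuclideanSpace ℝ (Fin 2) | ∃ dc dw : EuclideanSpace ℝ (Fin 2),
        y = dc + dw + x ∧ ‖dc‖ ≤ V ∧ ‖dw‖ ^ 2 ≤ C * V * ‖w‖ ^ (B - 1) * ⟪dw, w⟫} =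
      Metric.closedBall ((C * V / 2 * ‖w‖ ^ (B - 1)) • w + x)
        (V + C * V / 2 * ‖w‖ ^ B) := by
  set σ : ℝ := C * V / 2 * ‖w‖ ^ (B - 1) with hσdef
  have hσ : 0 ≤ σ :=
    mul_nonneg (by positivity) (Real.rpow_nonneg (norm_nonneg w) _)
  have hpow : ‖w‖ ^ (B - 1) * ‖w‖ = ‖w‖ ^ B := by
    rcases eq_or_lt_of_le (norm_nonneg w) with h0 | hpos
    · simp [← h0, Real.zero_rpow (show B ≠ 0 by linarith)]
    · have h2 := Real.rpow_add hpos (B - 1) 1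
      rw [Real.rpow_one] at h2
      rw [← h2]
      norm_num
  have hnormB : σ * ‖w‖ = C * V / 2 * ‖w‖ ^ B := by
    rw [hσdef, mul_assoc, hpow]
  have key : ∀ dw : EuclideanSpace ℝ (Fin 2),
      ‖dw‖ ^ 2 ≤ C * V * ‖w‖ ^ (B - 1) * ⟪dw, w⟫ ↔ ‖dw - σ • w‖ ≤ σ * ‖w‖ := by
    intro dw
    have hK : C * V * ‖w‖ ^ (B - 1) = 2 * σ := by rw [hσdef]; ring
    have expand : ‖dw - σ • w‖ ^ 2 = ‖dw‖ ^ 2 - 2 * σ * ⟪dw, w⟫ + (σ * ‖w‖) ^ 2 := by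
      rw [norm_sub_sq_real, real_inner_smul_right, norm_smul, Real.norm_eq_abs,
        abs_of_nonneg hσ]
      ring
    rw [hK]
    constructor
    · intro h
      have h2 : ‖dw - σ • w‖ ^ 2 ≤ (σ * ‖w‖) ^ 2 := by rw [expand]; nlinarith
      calc ‖dw - σ • w‖ = Real.sqrt (‖dw - σ • w‖ ^ 2) := (Real.sqrt_sq (norm_nonneg _)).symm
        _ ≤ Real.sqrt ((σ * ‖w‖) ^ 2) := Real.sqrt_le_sqrt h2
        _ = σ * ‖w‖ := Real.sqrt_sq (by positivity)
    · intro h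
      have h2 : ‖dw - σ • w‖ ^ 2 ≤ (σ * ‖w‖) ^ 2 := by
        exact pow_le_pow_left₀ (norm_nonneg _) h 2
      rw [expand] at h2; nlinarith
  ext y
  simp only [Set.mem_setOf_eq, Metric.mem_closedBall, dist_eq_norm]
  rw [← hnormB]
  constructor
  · rintro ⟨dc, dw, rfl, hdc, hdw⟩
    have heq : dc + dw + x - (σ • w + x) = dc + (dw - σ • w) := by abel
    rw [heq]
    calc ‖dc + (dw - σ • w)‖ ≤ ‖dc‖ + ‖dw - σ • w‖ := norm_add_le _ _
      _ ≤ V + σ * ‖w‖ := add_le_add hdc ((key dw).mp hdw)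
  · intro h
    set z := y - x - σ • w with hz
    have hzn : ‖z‖ ≤ V + σ * ‖w‖ := by
      have heq : y - (σ • w + x) = z := by rw [hz]; abel
      rwa [heq] at h
    by_cases hzV : ‖z‖ ≤ V
    · refine ⟨z, σ • w, by rw [hz]; abel, hzV, (key _).mpr ?_⟩
      simp [hσ, mul_nonneg hσ (norm_nonneg w)]
    · push_neg at hzV
      have hnz : 0 < ‖z‖ := lt_of_le_of_lt hV hzV
      have hfrac : V / ‖z‖ ≤ 1 := (div_le_one hnz).mpr hzV.le
      refine ⟨(V / ‖z‖) • z, (1 - V / ‖z‖) • z + σ • w, ?_, ?_, (key _).mpr ?_⟩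
      · rw [show (V / ‖z‖) • z + ((1 - V / ‖z‖) • z + σ • w) + x
            = (V / ‖z‖ + (1 - V / ‖z‖)) • z + σ • w + x by rw [add_smul]; abel,
          show V / ‖z‖ + (1 - V / ‖z‖) = (1 : ℝ) by ring, one_smul, hz]
        abel
      · rw [norm_smul, Real.norm_eq_abs, abs_of_nonneg (by positivity),
          div_mul_cancel₀ _ (ne_of_gt hnz)]
      · have heq : (1 - V / ‖z‖) • z + σ • w - σ • w = (1 - V / ‖z‖) • z := by abel
        rw [heq, norm_smul, Real.norm_eq_abs, abs_of_nonneg (by linarith)]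
        have : (1 - V / ‖z‖) * ‖z‖ = ‖z‖ - V := by
          field_simp
        rw [this]
        linarith
end

section
/- Let B, C, V, ε be real numbers with B ≥ 1, C ≥ 0, V ≥ 0, ε ≥ 0, and let w̄, w ∈ ℝ² with ‖w − w̄‖ ≤ ε. Set ν := ‖w̄‖ + ε. Suppose d ∈ ℝ² satisfies d = d^c + d^w for some d^c, d^w ∈ ℝ² with ‖d^c‖ ≤ V and ‖d^w‖² ≤ C·V·‖w‖^{B−1}·⟨d^w, w⟩. Then ‖d − (C·V/2)·ν^{B−1}·w‖ ≤ V + (C·V/2)·ν^B. -/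
open scoped RealInnerProductSpace

/-- Pointwise containment underlying Proposition 3.10: a point of the relaxed spread set
`S^∠(w, x)`, with wind `w` in the uncertainty ball around the forecast `w̄`, lies in the
ball spread set `S^∘(w, x)`. -/
theorem relaxed_spread_subset_ball_spread (B C V ε : ℝ)
    (hB : 1 ≤ B) (hC : 0 ≤ C) (hV : 0 ≤ V) (hε : 0 ≤ ε)
    (wbar w : EuclideanSpace ℝ (Fin 2)) (hw : ‖w - wbar‖ ≤ ε)
    (d dc dw : EuclideanSpace ℝ (Fin 2)) (hd : d = dc + dw) (hdc : ‖dc‖ ≤ V)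
    (hdw : ‖dw‖ ^ 2 ≤ C * V * ‖w‖ ^ (B - 1) * ⟪dw, w⟫) :
    ‖d - (C * V / 2 * (‖wbar‖ + ε) ^ (B - 1)) • w‖ ≤
      V + C * V / 2 * (‖wbar‖ + ε) ^ B := by
  set ν : ℝ := ‖wbar‖ + ε with hνdef
  have hν : 0 ≤ ν := by positivity
  have hwν : ‖w‖ ≤ ν := by
    have := norm_sub_norm_le w wbar
    simp only [hνdef]
    linarith
  -- inner product is nonnegative
  have hcoeff : 0 ≤ C * V * ‖w‖ ^ (B - 1) := by positivity
  have hip : 0 ≤ ⟪dw, w⟫ := by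
    by_contra h
    push_neg at h
    have h1 : C * V * ‖w‖ ^ (B - 1) * ⟪dw, w⟫ ≤ 0 :=
      mul_nonpos_of_nonneg_of_nonpos hcoeff h.le
    have h2 : ‖dw‖ ^ 2 ≤ 0 := le_trans hdw h1
    have h3 : dw = 0 := by
      have := norm_nonneg dw
      have : ‖dw‖ = 0 := by nlinarith
      exact norm_eq_zero.mp this
    rw [h3] at h
    simp at h
  rcases eq_or_lt_of_le hν with hν0 | hνpos
  · -- ν = 0 case : w = 0
    have hw0 : w = 0 := by
      have : ‖w‖ ≤ 0 := by rw [hν0]; exact hwν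
      exact norm_eq_zero.mp (le_antisymm this (norm_nonneg w))
    have hdw0 : dw = 0 := by
      have : ‖dw‖ ^ 2 ≤ 0 := by
        have : ⟪dw, w⟫ = 0 := by rw [hw0]; simp
        rw [this] at hdw; linarith [hdw]
      have h : ‖dw‖ = 0 := by nlinarith [norm_nonneg dw]
      exact norm_eq_zero.mp h
    have hB0 : (0:ℝ) ^ B = 0 := Real.zero_rpow (by linarith)
    rw [hd, hdw0, hw0]
    simp [← hν0, hB0]
    linarith
  · -- main case : ν > 0
    set σ : ℝ := C * V / 2 * ν ^ (B - 1) with hσdef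
    have hσ : 0 ≤ σ := by positivity
    have hmono : ‖w‖ ^ (B - 1) ≤ ν ^ (B - 1) :=
      Real.rpow_le_rpow (norm_nonneg w) hwν (by linarith)
    have hkey : ‖dw - σ • w‖ ≤ σ * ν := by
      have hsq : ‖dw - σ • w‖ ^ 2 ≤ (σ * ν) ^ 2 := by
        have hexp : ‖dw - σ • w‖ ^ 2 = ‖dw‖ ^ 2 - 2 * (σ * ⟪dw, w⟫) + σ ^ 2 * ‖w‖ ^ 2 := by
          rw [norm_sub_sq_real, real_inner_smul_right, norm_smul]
          rw [Real.norm_eq_abs, abs_of_nonneg hσ]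
          ring
        have h1 : ‖dw‖ ^ 2 ≤ 2 * (σ * ⟪dw, w⟫) := by
          calc ‖dw‖ ^ 2 ≤ C * V * ‖w‖ ^ (B - 1) * ⟪dw, w⟫ := hdw
            _ ≤ C * V * ν ^ (B - 1) * ⟪dw, w⟫ := by
                apply mul_le_mul_of_nonneg_right _ hip
                apply mul_le_mul_of_nonneg_left hmono (by positivity)
            _ = 2 * (σ * ⟪dw, w⟫) := by rw [hσdef]; ring
        have h2 : σ ^ 2 * ‖w‖ ^ 2 ≤ σ ^ 2 * ν ^ 2 := by
          apply mul_le_mul_of_nonneg_left _ (by positivity)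
          exact pow_le_pow_left₀ (norm_nonneg w) hwν 2
        rw [hexp]
        nlinarith
      have := Real.sqrt_le_sqrt hsq
      rwa [Real.sqrt_sq (norm_nonneg _), Real.sqrt_sq (by positivity)] at this
    have hrpow : ν ^ (B - 1) * ν = ν ^ B := by
      have h := (Real.rpow_add hνpos (B - 1) 1).symm
      rw [Real.rpow_one] at h
      simpa using h
    calc ‖d - σ • w‖ = ‖dc + (dw - σ • w)‖ := by rw [hd, add_sub_assoc]
      _ ≤ ‖dc‖ + ‖dw - σ • w‖ := norm_add_le _ _
      _ ≤ V + σ * ν := add_le_add hdc hkey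
      _ = V + C * V / 2 * ν ^ B := by rw [hσdef, mul_assoc, hrpow]
end

section
/- Let B, C, V, ε be real numbers with B ≥ 1, C ≥ 0, V ≥ 0, ε ≥ 0, and let w̄, x ∈ ℝ². Set ν := ‖w̄‖ + ε, σ̄ := (C·V/2)·ν^{B−1}, and τ̄ := V + (C·V/2)·ν^B. Define A₁ := {(w, x + d) ∈ ℝ² × ℝ² : ‖w − w̄‖ ≤ ε and d = d^c + d^w for some d^c, d^w ∈ ℝ² with ‖d^c‖ ≤ V and ‖d^w‖² ≤ C·V·‖w‖^{B−1}·⟨d^w, w⟩} and A₂ := {(w, x′) ∈ ℝ² × ℝ² : ‖w − w̄‖ ≤ ε and ‖x′ − σ̄·w − x‖ ≤ τ̄}. Then the convex hull of A₁ is contained in A₂. -/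
open scoped RealInnerProductSpace

/-- Containment assertion of Proposition 3.10: the convex hull of the graph `A₁` of the
relaxed spread set over the wind uncertainty ball is contained in the graph `A₂` of the
ball spread set. -/
theorem convexHull_relaxed_subset_ball (B C V ε : ℝ)
    (hB : 1 ≤ B) (hC : 0 ≤ C) (hV : 0 ≤ V) (hε : 0 ≤ ε)
    (wbar x : EuclideanSpace ℝ (Fin 2)) :
    convexHull ℝ
        {p : EuclideanSpace ℝ (Fin 2) × EuclideanSpace ℝ (Fin 2) |
          ‖p.1 - wbar‖ ≤ ε ∧
          ∃ dc dw : EuclideanSpace ℝ (Fin 2),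
            p.2 = x + (dc + dw) ∧ ‖dc‖ ≤ V ∧
            ‖dw‖ ^ 2 ≤ C * V * ‖p.1‖ ^ (B - 1) * ⟪dw, p.1⟫} ⊆
      {p : EuclideanSpace ℝ (Fin 2) × EuclideanSpace ℝ (Fin 2) |
        ‖p.1 - wbar‖ ≤ ε ∧
        ‖p.2 - (C * V / 2 * (‖wbar‖ + ε) ^ (B - 1)) • p.1 - x‖ ≤
          V + C * V / 2 * (‖wbar‖ + ε) ^ B} := by
  set ν : ℝ := ‖wbar‖ + ε with hνdef
  set σ : ℝ := C * V / 2 * ν ^ (B - 1) with hσdef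
  have hν0 : 0 ≤ ν := by positivity
  have hσ0 : 0 ≤ σ := by
    have : (0:ℝ) ≤ ν ^ (B - 1) := Real.rpow_nonneg hν0 _
    positivity
  have hνB : ν ^ (B - 1) * ν = ν ^ B := by
    rcases eq_or_lt_of_le hν0 with h | h
    · rw [← h, Real.zero_rpow (by linarith : B ≠ 0)]
      ring
    · rw [← Real.rpow_add_one h.ne' (B - 1)]
      norm_num
  clear_value σ ν
  apply convexHull_min
  · rintro ⟨w, y⟩ ⟨hw, dc, dw, hy, hdc, hdw⟩
    refine ⟨hw, ?_⟩
    simp only at hy hdw hw ⊢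
    have hwν : ‖w‖ ≤ ν := by
      have := norm_sub_norm_le w wbar
      simp only [hνdef]
      linarith
    have hip : 0 ≤ ⟪dw, w⟫ := by
      by_contra h
      push_neg at h
      have hr : (0:ℝ) ≤ ‖w‖ ^ (B - 1) := Real.rpow_nonneg (norm_nonneg w) _
      have h1 : C * V * ‖w‖ ^ (B - 1) * ⟪dw, w⟫ ≤ 0 :=
        mul_nonpos_of_nonneg_of_nonpos (by positivity) h.le
      have h2 : ‖dw‖ = 0 := by nlinarith [sq_nonneg ‖dw‖]
      have : dw = 0 := norm_eq_zero.mp h2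
      rw [this] at h
      simp at h
    have hmono : ‖w‖ ^ (B - 1) ≤ ν ^ (B - 1) :=
      Real.rpow_le_rpow (norm_nonneg w) hwν (by linarith)
    have hdw2 : ‖dw‖ ^ 2 ≤ 2 * σ * ⟪dw, w⟫ := by
      have h3 : C * V * ‖w‖ ^ (B - 1) * ⟪dw, w⟫ ≤ C * V * ν ^ (B - 1) * ⟪dw, w⟫ := by
        apply mul_le_mul_of_nonneg_right _ hip
        exact mul_le_mul_of_nonneg_left hmono (by positivity)
      calc ‖dw‖ ^ 2 ≤ C * V * ‖w‖ ^ (B - 1) * ⟪dw, w⟫ := hdw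
        _ ≤ C * V * ν ^ (B - 1) * ⟪dw, w⟫ := h3
        _ = 2 * σ * ⟪dw, w⟫ := by rw [hσdef]; ring
    have hexp : ‖dw - σ • w‖ ^ 2 = ‖dw‖ ^ 2 - 2 * σ * ⟪dw, w⟫ + σ ^ 2 * ‖w‖ ^ 2 := by
      rw [norm_sub_sq_real, real_inner_smul_right, norm_smul, Real.norm_eq_abs,
        abs_of_nonneg hσ0]
      ring
    have h5 : σ * ‖w‖ ≤ σ * ν := mul_le_mul_of_nonneg_left hwν hσ0
    have h6 : ‖dw - σ • w‖ ^ 2 ≤ (σ * ν) ^ 2 := by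
      have h7 : (σ * ‖w‖) ^ 2 ≤ (σ * ν) ^ 2 :=
        pow_le_pow_left₀ (by positivity) h5 2
      nlinarith [h7]
    have key : ‖dw - σ • w‖ ≤ σ * ν := by
      nlinarith [h6, norm_nonneg (dw - σ • w), mul_nonneg hσ0 hν0]
    have hrw : y - σ • w - x = dc + (dw - σ • w) := by
      rw [hy]; abel
    have hσν : σ * ν = C * V / 2 * ν ^ B := by
      rw [hσdef, mul_assoc, hνB]
    calc ‖y - σ • w - x‖ = ‖dc + (dw - σ • w)‖ := by rw [hrw]
      _ ≤ ‖dc‖ + ‖dw - σ • w‖ := norm_add_le _ _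
      _ ≤ V + C * V / 2 * ν ^ B := by rw [← hσν]; linarith
  · intro p hp q hq a b ha hb hab
    obtain ⟨hp1, hp2⟩ := hp
    obtain ⟨hq1, hq2⟩ := hq
    constructor
    · have e1 : (a • p + b • q).1 - wbar = a • (p.1 - wbar) + b • (q.1 - wbar) := by
        simp only [Prod.fst_add, Prod.smul_fst]
        match_scalars <;> first | ring1 | linear_combination -hab | linear_combination hab
      rw [e1]
      calc ‖a • (p.1 - wbar) + b • (q.1 - wbar)‖
          ≤ ‖a • (p.1 - wbar)‖ + ‖b • (q.1 - wbar)‖ := norm_add_le _ _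
        _ = a * ‖p.1 - wbar‖ + b * ‖q.1 - wbar‖ := by
            rw [norm_smul, norm_smul, Real.norm_eq_abs, Real.norm_eq_abs,
              abs_of_nonneg ha, abs_of_nonneg hb]
        _ ≤ ε := by
            have h1 := mul_le_mul_of_nonneg_left hp1 ha
            have h2 := mul_le_mul_of_nonneg_left hq1 hb
            have h3 : a * ε + b * ε = ε := by rw [← add_mul, hab, one_mul]
            linarith
    · have e2 : (a • p + b • q).2 - σ • (a • p + b • q).1 - x =
          a • (p.2 - σ • p.1 - x) + b • (q.2 - σ • q.1 - x) := by
        simp only [Prod.fst_add, Prod.smul_fst, Prod.snd_add, Prod.smul_snd]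
        match_scalars <;> first | ring1 | linear_combination -hab | linear_combination hab
      rw [e2]
      calc ‖a • (p.2 - σ • p.1 - x) + b • (q.2 - σ • q.1 - x)‖
          ≤ ‖a • (p.2 - σ • p.1 - x)‖ + ‖b • (q.2 - σ • q.1 - x)‖ := norm_add_le _ _
        _ = a * ‖p.2 - σ • p.1 - x‖ + b * ‖q.2 - σ • q.1 - x‖ := by
            rw [norm_smul, norm_smul, Real.norm_eq_abs, Real.norm_eq_abs,
              abs_of_nonneg ha, abs_of_nonneg hb]
        _ ≤ V + C * V / 2 * ν ^ B := by
            have h1 := mul_le_mul_of_nonneg_left hp2 ha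
            have h2 := mul_le_mul_of_nonneg_left hq2 hb
            have h3 : a * (V + C * V / 2 * ν ^ B) + b * (V + C * V / 2 * ν ^ B) =
                V + C * V / 2 * ν ^ B := by rw [← add_mul, hab, one_mul]
            linarith
end

section
/- Let B, C, V, ε be real numbers with B ≥ 1, C ≥ 0, V ≥ 0, ε ≥ 0, and let x ∈ ℝ². Define σ(ν) := (C·V/2)·ν^{B−1} and τ(ν) := V + (C·V/2)·ν^B for ν ≥ 0. Then the convex hull of the set {(w, x′) ∈ ℝ² × ℝ² : ‖w‖ ≤ ε and ‖x′ − σ(‖w‖)·w − x‖ ≤ τ(‖w‖)} equals the set {(w, x′) ∈ ℝ² × ℝ² : ‖w‖ ≤ ε and ‖x′ − σ(ε)·w − x‖ ≤ τ(ε)}. -/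
open scoped RealInnerProductSpace

lemma exists_unit_orth' (w : EuclideanSpace ℝ (Fin 2)) :
    ∃ u : EuclideanSpace ℝ (Fin 2), ‖u‖ = 1 ∧ ⟪w, u⟫ = 0 := by
  rcases eq_or_ne w 0 with rfl | hw
  · refine ⟨EuclideanSpace.single 0 1, by simp, by simp⟩
  · have hne : ((ℝ ∙ w)ᗮ : Submodule ℝ (EuclideanSpace ℝ (Fin 2))) ≠ ⊥ := by
      intro h
      have h1 := Submodule.finrank_add_finrank_orthogonal
        (K := (ℝ ∙ w : Submodule ℝ (EuclideanSpace ℝ (Fin 2))))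
      rw [h, finrank_bot, finrank_span_singleton hw, finrank_euclideanSpace_fin] at h1
      omega
    obtain ⟨v, hv, hv0⟩ := Submodule.exists_mem_ne_zero_of_ne_bot hne
    refine ⟨(‖v‖⁻¹ : ℝ) • v, norm_smul_inv_norm hv0, ?_⟩
    have : ⟪w, v⟫ = 0 :=
      (Submodule.mem_orthogonal _ v).mp hv w (Submodule.mem_span_singleton_self w)
    rw [real_inner_smul_right, this, mul_zero]

lemma rpow_sub_one_mul' {t B : ℝ} (ht : 0 ≤ t) (hB : 1 ≤ B) :
    t ^ (B - 1) * t = t ^ B := by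
  rcases eq_or_lt_of_le ht with h | h
  · rw [← h]
    rw [Real.zero_rpow (by linarith : B ≠ 0), mul_zero]
  · have h2 := Real.rpow_add h (B - 1) 1
    rw [Real.rpow_one] at h2
    rw [← h2]
    norm_num

/-- Exactness (convex hull) assertion of Proposition 3.10 in the case of zero nominal
wind forecast: the convex hull of the graph of the relaxed spread set
`S^∠(w, x) = B_{τ(‖w‖)}(σ(‖w‖)·w + x)` over the wind ball `B_ε(0)` equals the graph of
the ball spread set `S^∘(w, x) = B_{τ(ε)}(σ(ε)·w + x)`, where `σ(ν) = (C·V/2)·ν^(B-1)`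
and `τ(ν) = V + (C·V/2)·ν^B`. -/
theorem convexHull_relaxed_eq_ball_of_zero_forecast (B C V ε : ℝ)
    (hB : 1 ≤ B) (hC : 0 ≤ C) (hV : 0 ≤ V) (hε : 0 ≤ ε)
    (x : EuclideanSpace ℝ (Fin 2)) :
    convexHull ℝ
        {p : EuclideanSpace ℝ (Fin 2) × EuclideanSpace ℝ (Fin 2) |
          ‖p.1‖ ≤ ε ∧
          ‖p.2 - (C * V / 2 * ‖p.1‖ ^ (B - 1)) • p.1 - x‖ ≤
            V + C * V / 2 * ‖p.1‖ ^ B} =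
      {p : EuclideanSpace ℝ (Fin 2) × EuclideanSpace ℝ (Fin 2) |
        ‖p.1‖ ≤ ε ∧
        ‖p.2 - (C * V / 2 * ε ^ (B - 1)) • p.1 - x‖ ≤
          V + C * V / 2 * ε ^ B} := by
  have hk : (0:ℝ) ≤ C * V / 2 := by positivity
  have hεp : (0:ℝ) ≤ ε ^ (B - 1) := Real.rpow_nonneg hε _
  apply Set.Subset.antisymm
  · apply convexHull_min
    · -- inner set ⊆ outer set
      rintro ⟨w, y⟩ ⟨h1, h2⟩
      simp only [Set.mem_setOf_eq] at h1 h2 ⊢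
      refine ⟨h1, ?_⟩
      have hw : (0:ℝ) ≤ ‖w‖ := norm_nonneg w
      have hpow : ‖w‖ ^ (B - 1) ≤ ε ^ (B - 1) :=
        Real.rpow_le_rpow hw h1 (by linarith)
      have hmw : ‖w‖ ^ (B - 1) * ‖w‖ = ‖w‖ ^ B := rpow_sub_one_mul' hw hB
      have hme : ε ^ (B - 1) * ε = ε ^ B := rpow_sub_one_mul' hε hB
      have key : y - (C * V / 2 * ε ^ (B - 1)) • w - x =
          (y - (C * V / 2 * ‖w‖ ^ (B - 1)) • w - x) -
            (C * V / 2 * ε ^ (B - 1) - C * V / 2 * ‖w‖ ^ (B - 1)) • w := by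
        module
      rw [key]
      have h3 := norm_sub_le (y - (C * V / 2 * ‖w‖ ^ (B - 1)) • w - x)
        ((C * V / 2 * ε ^ (B - 1) - C * V / 2 * ‖w‖ ^ (B - 1)) • w)
      have h4 : ‖(C * V / 2 * ε ^ (B - 1) - C * V / 2 * ‖w‖ ^ (B - 1)) • w‖ =
          (C * V / 2 * ε ^ (B - 1) - C * V / 2 * ‖w‖ ^ (B - 1)) * ‖w‖ := by
        rw [norm_smul, Real.norm_eq_abs, abs_of_nonneg (by nlinarith)]
      rw [h4] at h3
      nlinarith [mul_nonneg (mul_nonneg hk hεp) (sub_nonneg.mpr h1)]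
    · -- outer set is convex
      rintro ⟨w₁, y₁⟩ h₁ ⟨w₂, y₂⟩ h₂ a b ha hb hab
      obtain ⟨h₁w, h₁y⟩ := h₁
      obtain ⟨h₂w, h₂y⟩ := h₂
      simp only [Set.mem_setOf_eq, Prod.smul_mk, Prod.mk_add_mk] at *
      constructor
      · calc ‖a • w₁ + b • w₂‖ ≤ ‖a • w₁‖ + ‖b • w₂‖ := norm_add_le _ _
          _ = a * ‖w₁‖ + b * ‖w₂‖ := by
              rw [norm_smul, norm_smul, Real.norm_eq_abs, Real.norm_eq_abs,
                abs_of_nonneg ha, abs_of_nonneg hb]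
          _ ≤ a * ε + b * ε := by
              gcongr
          _ = ε := by rw [← add_mul, hab, one_mul]
      · have key : a • y₁ + b • y₂ - (C * V / 2 * ε ^ (B - 1)) • (a • w₁ + b • w₂) - x =
            a • (y₁ - (C * V / 2 * ε ^ (B - 1)) • w₁ - x) +
              b • (y₂ - (C * V / 2 * ε ^ (B - 1)) • w₂ - x) := by
          have h0 : a • y₁ + b • y₂ - (C * V / 2 * ε ^ (B - 1)) • (a • w₁ + b • w₂) -
              (a + b) • x =
              a • (y₁ - (C * V / 2 * ε ^ (B - 1)) • w₁ - x) +
                b • (y₂ - (C * V / 2 * ε ^ (B - 1)) • w₂ - x) := by module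
          rw [hab, one_smul] at h0
          exact h0
        rw [key]
        calc ‖_ + _‖ ≤ ‖a • (y₁ - (C * V / 2 * ε ^ (B - 1)) • w₁ - x)‖ +
              ‖b • (y₂ - (C * V / 2 * ε ^ (B - 1)) • w₂ - x)‖ := norm_add_le _ _
          _ = a * ‖y₁ - (C * V / 2 * ε ^ (B - 1)) • w₁ - x‖ +
              b * ‖y₂ - (C * V / 2 * ε ^ (B - 1)) • w₂ - x‖ := by
              rw [norm_smul, norm_smul, Real.norm_eq_abs, Real.norm_eq_abs,
                abs_of_nonneg ha, abs_of_nonneg hb]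
          _ ≤ a * (V + C * V / 2 * ε ^ B) + b * (V + C * V / 2 * ε ^ B) := by gcongr
          _ = V + C * V / 2 * ε ^ B := by rw [← add_mul, hab, one_mul]
  · -- outer ⊆ convexHull inner
    rintro ⟨w, y⟩ ⟨h1, h2⟩
    simp only [Set.mem_setOf_eq] at h1 h2
    obtain ⟨u, hu1, hu0⟩ := exists_unit_orth' w
    set s : ℝ := Real.sqrt (ε ^ 2 - ‖w‖ ^ 2) with hs_def
    have hs : s ^ 2 = ε ^ 2 - ‖w‖ ^ 2 :=
      Real.sq_sqrt (by nlinarith [norm_nonneg w])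
    set c : ℝ := C * V / 2 * ε ^ (B - 1) with hc_def
    have hnorm : ∀ t : ℝ, ‖w + t • (s • u)‖ = Real.sqrt (‖w‖ ^ 2 + t ^ 2 * s ^ 2) := by
      intro t
      have h5 : ‖w + t • (s • u)‖ ^ 2 = ‖w‖ ^ 2 + t ^ 2 * s ^ 2 := by
        have h6 : ‖t • (s • u)‖ ^ 2 = t ^ 2 * s ^ 2 := by
          rw [norm_smul, norm_smul, hu1, mul_one, Real.norm_eq_abs, Real.norm_eq_abs,
            mul_pow, sq_abs, sq_abs]
        rw [norm_add_sq_real, real_inner_smul_right, real_inner_smul_right, hu0,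
          mul_zero, mul_zero, h6]
        ring
      rw [← h5, Real.sqrt_sq (norm_nonneg _)]
    have hn1 : ‖w + s • u‖ = ε := by
      have := hnorm 1
      rw [one_smul] at this
      rw [this]; rw [one_pow, one_mul, hs]
      rw [show ‖w‖ ^ 2 + (ε ^ 2 - ‖w‖ ^ 2) = ε ^ 2 by ring, Real.sqrt_sq hε]
    have hn2 : ‖w - s • u‖ = ε := by
      have := hnorm (-1)
      rw [neg_one_smul, ← sub_eq_add_neg] at this
      rw [this, neg_one_sq, one_mul, hs,
        show ‖w‖ ^ 2 + (ε ^ 2 - ‖w‖ ^ 2) = ε ^ 2 by ring, Real.sqrt_sq hε]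
    set A : Set (EuclideanSpace ℝ (Fin 2) × EuclideanSpace ℝ (Fin 2)) :=
      {p | ‖p.1‖ ≤ ε ∧
          ‖p.2 - (C * V / 2 * ‖p.1‖ ^ (B - 1)) • p.1 - x‖ ≤
            V + C * V / 2 * ‖p.1‖ ^ B} with hA_def
    have hp₁ : ((w + s • u, y + (s * c) • u) :
        EuclideanSpace ℝ (Fin 2) × EuclideanSpace ℝ (Fin 2)) ∈ A := by
      refine ⟨by rw [hn1], ?_⟩
      show ‖y + (s * c) • u - (C * V / 2 * ‖w + s • u‖ ^ (B - 1)) • (w + s • u) - x‖ ≤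
        V + C * V / 2 * ‖w + s • u‖ ^ B
      rw [hn1, ← hc_def]
      have : y + (s * c) • u - c • (w + s • u) - x = y - c • w - x := by module
      rw [this]
      exact h2
    have hp₂ : ((w - s • u, y - (s * c) • u) :
        EuclideanSpace ℝ (Fin 2) × EuclideanSpace ℝ (Fin 2)) ∈ A := by
      refine ⟨by rw [hn2], ?_⟩
      show ‖y - (s * c) • u - (C * V / 2 * ‖w - s • u‖ ^ (B - 1)) • (w - s • u) - x‖ ≤
        V + C * V / 2 * ‖w - s • u‖ ^ B
      rw [hn2, ← hc_def]
      have : y - (s * c) • u - c • (w - s • u) - x = y - c • w - x := by module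
      rw [this]
      exact h2
    have hmid : midpoint ℝ
        ((w + s • u, y + (s * c) • u) :
          EuclideanSpace ℝ (Fin 2) × EuclideanSpace ℝ (Fin 2))
        (w - s • u, y - (s * c) • u) = (w, y) := by
      rw [midpoint_eq_smul_add]
      refine Prod.ext ?_ ?_
      · show (2⁻¹ : ℝ) • ((w + s • u) + (w - s • u)) = w
        module
      · show (2⁻¹ : ℝ) • ((y + (s * c) • u) + (y - (s * c) • u)) = y
        module
    exact hmid ▸ segment_subset_convexHull hp₁ hp₂ (midpoint_mem_segment _ _)
end

section
/- Let ε > 0, τ ≥ 0, σ ∈ ℝ, and let w, x ∈ ℝ² with ‖w‖ ≤ ε. Then there exist w_A, w_B ∈ ℝ² with ‖w_A‖ = ‖w_B‖ = ε and a real number λ ∈ [0, 1] such that λ·w_A + (1 − λ)·w_B = w and λ • B_τ(σ·w_A + x) + (1 − λ) • B_τ(σ·w_B + x) = B_τ(σ·w + x), where λ • S denotes the pointwise scaling {λ·s : s ∈ S} and the sum is the Minkowski sum of sets. -/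
open scoped Pointwise

lemma ball_comb {E : Type*} [NormedAddCommGroup E] [NormedSpace ℝ E] [ProperSpace E]
    {l τ : ℝ} (h0 : 0 ≤ l) (h1 : l ≤ 1) (hτ : 0 ≤ τ) (c₁ c₂ : E) :
    l • Metric.closedBall c₁ τ + (1 - l) • Metric.closedBall c₂ τ =
      Metric.closedBall (l • c₁ + (1 - l) • c₂) τ := by
  rw [smul_closedBall _ _ hτ, smul_closedBall _ _ hτ,
    closedBall_add_closedBall (by positivity) (by positivity),
    Real.norm_of_nonneg h0, Real.norm_of_nonneg (by linarith)]
  ring_nf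

/-- The key convex-combination step in the exactness proof of Proposition 3.10: any wind
vector `w` in the ball of radius `ε` is a convex combination of two wind vectors of norm
`ε` whose scaled spread balls Minkowski-sum to the spread ball of `w`. -/
theorem ball_convex_combination_step (ε τ : ℝ) (hε : 0 < ε) (hτ : 0 ≤ τ) (σ : ℝ)
    (w x : EuclideanSpace ℝ (Fin 2)) (hw : ‖w‖ ≤ ε) :
    ∃ (wA wB : EuclideanSpace ℝ (Fin 2)) (l : ℝ),
      ‖wA‖ = ε ∧ ‖wB‖ = ε ∧ 0 ≤ l ∧ l ≤ 1 ∧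
      l • wA + (1 - l) • wB = w ∧
      l • Metric.closedBall (σ • wA + x) τ + (1 - l) • Metric.closedBall (σ • wB + x) τ =
        Metric.closedBall (σ • w + x) τ := by
  classical
  set u : EuclideanSpace ℝ (Fin 2) :=
    if h : w = 0 then EuclideanSpace.single 0 ε else (ε / ‖w‖) • w with hu
  have hun : ‖u‖ = ε := by
    rw [hu]
    split_ifs with h
    · rw [EuclideanSpace.norm_single]; exact abs_of_pos hε
    · rw [norm_smul, Real.norm_of_nonneg (by positivity)]
      rw [div_mul_eq_mul_div, mul_div_assoc,
        div_self (norm_ne_zero_iff.mpr h), mul_one]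
  set l : ℝ := (ε + ‖w‖) / (2 * ε) with hl
  have hwpos : 0 ≤ ‖w‖ := norm_nonneg w
  have h0 : 0 ≤ l := by positivity
  have h1 : l ≤ 1 := by rw [hl, div_le_one (by positivity)]; linarith
  have hcomb : l • u + (1 - l) • (-u) = w := by
    have : l • u + (1 - l) • (-u) = (2 * l - 1) • u := by
      rw [smul_neg]; module
    rw [this, hu]
    split_ifs with h
    · have : (2 * l - 1 : ℝ) = 0 := by
        rw [hl, h, norm_zero]; field_simp; ring
      rw [this, zero_smul, h]
    · have hln : (2 * l - 1 : ℝ) = ‖w‖ / ε := by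
        rw [hl]; field_simp; ring
      rw [hln, smul_smul]
      have : ‖w‖ / ε * (ε / ‖w‖) = 1 := by
        have hwne : ‖w‖ ≠ 0 := norm_ne_zero_iff.mpr h
        field_simp
      rw [this, one_smul]
  refine ⟨u, -u, l, hun, by rw [norm_neg]; exact hun, h0, h1, hcomb, ?_⟩
  rw [ball_comb h0 h1 hτ]
  have : l • (σ • u + x) + (1 - l) • (σ • (-u) + x)
      = σ • (l • u + (1 - l) • (-u)) + x := by module
  rw [this, hcomb]
end
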